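/- Let Φ = ({E_i}_{i=0}^d; {E*_i}_{i=0}^d) be a symmetric idempotent system on V with d ≥ 1, and let A ∈ End(V). Then the following are equivalent: (i) Φ is P-polynomial and A = α A_1 + β I for some scalars α, β with α ≠ 0; (ii) for 0 ≤ i ≤ d there exists a polynomial f_i ∈ F[x] of degree exactly i such that A_i = f_i(A). -/

import Mathlib

section helpers
variable {F V : Type*} [Field F] [AddCommGroup V] [Module F V] [FiniteDimensional F V]

lemma mem_oneDim {S : Submodule F V} (hS : Module.finrank F S = 1) {u x : V}
    (hu : u ∈ S) (hune : u ≠ 0) (hx : x ∈ S) : ∃ c : F, x = c • u := by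
  have hle : Submodule.span F {u} ≤ S := by
    rw [Submodule.span_le]; simpa using hu
  have heq : Submodule.span F {u} = S :=
    Submodule.eq_of_le_of_finrank_le hle (by rw [hS, finrank_span_singleton hune])
  rw [← heq] at hx
  obtain ⟨c, hc⟩ := Submodule.mem_span_singleton.1 hx
  exact ⟨c, hc.symm⟩

lemma oneDim_exists_ne_zero {S : Submodule F V} (hS : Module.finrank F S = 1) :
    ∃ u ∈ S, u ≠ 0 := by
  by_contra h
  push_neg at h
  have : S = ⊥ := (Submodule.eq_bot_iff S).2 h
  rw [this, finrank_bot] at hS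
  exact absurd hS (by norm_num)

lemma rank1_sandwich (e Y : Module.End F V) (he : e * e = e)
    (hrk : Module.finrank F (LinearMap.range e) = 1) : ∃ c : F, e * Y * e = c • e := by
  obtain ⟨u, humem, hune⟩ := oneDim_exists_ne_zero hrk
  obtain ⟨c, hc⟩ := mem_oneDim hrk humem hune (LinearMap.mem_range_self e (Y u))
  refine ⟨c, LinearMap.ext fun x => ?_⟩
  obtain ⟨a, ha⟩ := mem_oneDim hrk humem hune (LinearMap.mem_range_self e x)
  have heu : e u = u := by
    obtain ⟨z, hz⟩ := humem
    rw [← hz, ← Module.End.mul_apply, he]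
  calc (e * Y * e) x = e (Y (e x)) := rfl
    _ = a • e (Y u) := by rw [ha, map_smul, map_smul]
    _ = a • (c • u) := by rw [hc]
    _ = c • (a • u) := smul_comm a c u
    _ = (c • e) x := by rw [← ha]; rfl

lemma rank1_apply_ne_zero (e W : Module.End F V)
    (hrk : Module.finrank F (LinearMap.range e) = 1) {x₀ : V}
    (hx : e x₀ ≠ 0) (hW : W * e ≠ 0) : W (e x₀) ≠ 0 := by
  obtain ⟨z, hz⟩ : ∃ z, W (e z) ≠ 0 := by
    by_contra h
    push_neg at h
    exact hW (LinearMap.ext fun z => h z)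
  obtain ⟨a, ha⟩ := mem_oneDim hrk (LinearMap.mem_range_self e x₀) hx
    (LinearMap.mem_range_self e z)
  intro h0
  rw [ha, map_smul, h0, smul_zero] at hz
  exact hz rfl

end helpers



open Polynomial in
/-- Triangular expansion of a polynomial in a family with degrees 0,...,m. -/
lemma poly_expand {F : Type*} [Field F] {m : ℕ} (f : Fin (m+1) → Polynomial F)
    (hdeg : ∀ l, (f l).degree = ((l : ℕ) : WithBot ℕ)) :
    ∀ (n : ℕ) (hn : n < m + 1) (g : Polynomial F), g.degree ≤ (n : WithBot ℕ) →
      ∃ c : Fin (m+1) → F, g = ∑ l, c l • f l ∧ (∀ l : Fin (m+1), n < (l:ℕ) → c l = 0) ∧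
        c ⟨n, hn⟩ = g.coeff n * ((f ⟨n, hn⟩).coeff n)⁻¹ := by
  intro n
  induction n with
  | zero =>
    intro hn g hg
    have hf0 : (f ⟨0, hn⟩).degree = (0 : WithBot ℕ) := by simpa using hdeg ⟨0, hn⟩
    have hf0c : f ⟨0, hn⟩ = C ((f ⟨0, hn⟩).coeff 0) := eq_C_of_degree_le_zero hf0.le
    have ha : (f ⟨0, hn⟩).coeff 0 ≠ 0 := by
      intro h0
      rw [h0, map_zero] at hf0c
      rw [hf0c] at hf0
      simp at hf0
    refine ⟨fun l => if l = ⟨0, hn⟩ then g.coeff 0 * ((f ⟨0, hn⟩).coeff 0)⁻¹ else 0, ?_, ?_, ?_⟩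
    · rw [Finset.sum_eq_single (⟨0, hn⟩ : Fin (m+1))]
      · dsimp only
        rw [if_pos rfl, eq_C_of_degree_le_zero hg]
        nth_rewrite 2 [hf0c]
        rw [smul_C]
        congr 1
        rw [smul_eq_mul, coeff_C_zero, mul_assoc, inv_mul_cancel₀ ha, mul_one]
      · intro l _ hl; dsimp only; rw [if_neg hl, zero_smul]
      · intro h; exact absurd (Finset.mem_univ _) h
    · intro l hl
      have hne : l ≠ ⟨0, hn⟩ := by
        intro h; rw [h] at hl; simp at hl
      exact if_neg hne
    · exact if_pos rfl
  | succ n ih =>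
    intro hn g hg
    have hn' : n < m + 1 := by omega
    set b := g.coeff (n+1) * ((f ⟨n+1, hn⟩).coeff (n+1))⁻¹ with hb
    have hfd : (f ⟨n+1, hn⟩).degree = ((n+1 : ℕ) : WithBot ℕ) := by simpa using hdeg ⟨n+1, hn⟩
    have hfnd : (f ⟨n+1, hn⟩).natDegree = n+1 := natDegree_eq_of_degree_eq_some hfd
    have hfne : f ⟨n+1, hn⟩ ≠ 0 :=
      Polynomial.ne_zero_of_natDegree_gt (n := 0) (by rw [hfnd]; exact Nat.succ_pos n)
    have hlc : (f ⟨n+1, hn⟩).coeff (n+1) ≠ 0 := by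
      have := leadingCoeff_ne_zero.2 hfne
      rwa [leadingCoeff, hfnd] at this
    set g' := g - b • f ⟨n+1, hn⟩ with hg'
    have hg'deg : g'.degree ≤ (n : WithBot ℕ) := by
      rw [degree_le_iff_coeff_zero]
      intro k hk
      have hk' : n < k := by exact_mod_cast hk
      rcases Nat.lt_or_ge (n+1) k with h | h
      · have h1 : g.coeff k = 0 := coeff_eq_zero_of_degree_lt (lt_of_le_of_lt hg (by exact_mod_cast h))
        have h2 : (f ⟨n+1, hn⟩).coeff k = 0 :=
          coeff_eq_zero_of_degree_lt (by rw [hfd]; exact_mod_cast h)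
        simp [hg', h1, h2]
      · have hk2 : k = n + 1 := by omega
        subst hk2
        simp only [hg', coeff_sub, coeff_smul, smul_eq_mul, hb]
        field_simp
        ring
    obtain ⟨c', hc'sum, hc'van, -⟩ := ih hn' g' hg'deg
    refine ⟨fun l => c' l + if l = ⟨n+1, hn⟩ then b else 0, ?_, ?_, ?_⟩
    · have : ∀ l : Fin (m+1), (c' l + if l = ⟨n+1, hn⟩ then b else 0) • f l
          = c' l • f l + (if l = ⟨n+1, hn⟩ then b else 0) • f l := fun l => add_smul _ _ _
      rw [Finset.sum_congr rfl (fun l _ => this l), Finset.sum_add_distrib, ← hc'sum]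
      have : ∑ l, (if l = ⟨n+1, hn⟩ then b else 0) • f l = b • f ⟨n+1, hn⟩ := by
        rw [Finset.sum_eq_single (⟨n+1, hn⟩ : Fin (m+1))]
        · simp
        · intro l _ hl; simp [hl]
        · intro h; simp at h
      rw [this, hg']
      ring
    · intro l hl
      have h1 : c' l = 0 := hc'van l (by omega)
      have h2 : l ≠ ⟨n+1, hn⟩ := by intro h; rw [h] at hl; simp at hl
      simp [h1, h2]
    · have h1 : c' ⟨n+1, hn⟩ = 0 := hc'van _ (by simp)
      simp [h1, hb]

open Polynomial in
noncomputable def recPoly {F : Type*} [Field F] (f1 : Polynomial F) (c : ℕ → F × F × F) :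
    ℕ → Polynomial F
  | 0 => 1
  | 1 => f1
  | n + 2 => Polynomial.C (c n).1 *
      (f1 * recPoly f1 c (n+1) - Polynomial.C (c n).2.1 * recPoly f1 c (n+1)
        - Polynomial.C (c n).2.2 * recPoly f1 c n)



theorem stmt_19 (d : ℕ) (F V : Type*) [Field F] [AddCommGroup V] [Module F V]
    [FiniteDimensional F V] (hdim : Module.finrank F V = d + 1)
    (E Es : Fin (d + 1) → Module.End F V)
    (hE : ∀ i j, E i * E j = if i = j then E i else 0)
    (hErk : ∀ i, Module.finrank F (LinearMap.range (E i)) = 1)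
    (hEs : ∀ i j, Es i * Es j = if i = j then Es i else 0)
    (hEsrk : ∀ i, Module.finrank F (LinearMap.range (Es i)) = 1)
    (hnz : ∀ i, E 0 * Es i * E 0 ≠ 0)
    (hnzs : ∀ i, Es 0 * E i * Es 0 ≠ 0)
    (dag : Module.End F V ≃ₗ[F] Module.End F V)
    (hdagmul : ∀ Y Z, dag (Y * Z) = dag Z * dag Y)
    (hdagE : ∀ i, dag (E i) = E i)
    (hdagEs : ∀ i, dag (Es i) = Es i)
    (A : Fin (d + 1) → Module.End F V)
    (hAmem : ∀ i, A i ∈ Submodule.span F (Set.range E))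
    (hAdef : ∀ i, A i * (Es 0 * E 0) = Es i * E 0)
    (p : Fin (d + 1) → Fin (d + 1) → Fin (d + 1) → F)
    (hp : ∀ i j, A i * A j = ∑ h, p h i j • A h)
    (hd : 1 ≤ d) (X : Module.End F V) :
    ((∀ h i j : Fin (d + 1),
          (((i : ℕ) + (j : ℕ) < (h : ℕ) ∨ (h : ℕ) + (j : ℕ) < (i : ℕ) ∨
            (h : ℕ) + (i : ℕ) < (j : ℕ)) → p h i j = 0) ∧
          (((h : ℕ) = (i : ℕ) + (j : ℕ) ∨ (i : ℕ) = (h : ℕ) + (j : ℕ) ∨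
            (j : ℕ) = (h : ℕ) + (i : ℕ)) → p h i j ≠ 0)) ∧
        (∃ α β : F, α ≠ 0 ∧ X = α • A 1 + β • (1 : Module.End F V)))
      ↔ (∀ i : Fin (d + 1), ∃ f : Polynomial F,
          f.degree = (i : ℕ) ∧ A i = Polynomial.aeval X f) := by
  classical
  have hv1 : ((1 : Fin (d+1)) : ℕ) = 1 := by
    rw [Fin.val_one']; exact Nat.mod_eq_of_lt (by omega)
  have hE0 : E 0 * E 0 = E 0 := by simpa using hE 0 0
  have hT : ∀ l, ∃ c : F, E 0 * Es l * E 0 = c • E 0 :=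
    fun l => rank1_sandwich (E 0) (Es l) hE0 (hErk 0)
  choose t ht using hT
  have htne : ∀ l, t l ≠ 0 := by
    intro l h0
    apply hnz l
    rw [ht l, h0, zero_smul]
  have hE0ne : E 0 ≠ 0 := by
    intro h0; apply hnz 0; rw [h0]; simp
  have hEsE : ∀ l, Es l * E 0 ≠ 0 := by
    intro l h0
    apply hnz l
    rw [mul_assoc, h0, mul_zero]
  obtain ⟨x₀, hx₀⟩ : ∃ x, (Es 0 * E 0) x ≠ 0 := by
    by_contra h; push_neg at h; exact hEsE 0 (LinearMap.ext h)
  have hx0E : E 0 x₀ ≠ 0 := by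
    intro h0
    apply hx₀
    show Es 0 (E 0 x₀) = 0
    rw [h0, map_zero]
  set v : Fin (d+1) → V := fun l => (Es l * E 0) x₀ with hv
  have hvne : ∀ l, v l ≠ 0 :=
    fun l => rank1_apply_ne_zero (E 0) (Es l) (hErk 0) hx0E (hEsE l)
  have hvind : ∀ g : Fin (d+1) → F, ∑ l, g l • v l = 0 → ∀ l, g l = 0 := by
    intro g hg l
    have h1 : Es l (∑ k, g k • v k) = 0 := by rw [hg, map_zero]
    rw [map_sum] at h1
    have h2 : ∀ k, Es l (g k • v k) = if l = k then g k • v k else 0 := by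
      intro k
      rw [map_smul]
      have h3 : Es l (v k) = (Es l * (Es k * E 0)) x₀ := rfl
      rw [h3, ← mul_assoc, hEs l k]
      split
      · next h => subst h; rfl
      · next h => simp
    rw [Finset.sum_congr rfl fun k _ => h2 k, Finset.sum_ite_eq] at h1
    simp only [Finset.mem_univ, if_true] at h1
    exact (smul_eq_zero.1 h1).resolve_right (hvne l)
  have hAind : ∀ g : Fin (d+1) → F, ∑ l, g l • A l = 0 → ∀ l, g l = 0 := by
    intro g hg
    apply hvind
    have h1 : (∑ l, g l • A l) * (Es 0 * E 0) = 0 := by rw [hg, zero_mul]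
    rw [Finset.sum_mul] at h1
    rw [Finset.sum_congr rfl fun l _ => by rw [smul_mul_assoc, hAdef l]] at h1
    have h2 := LinearMap.congr_fun h1 x₀
    simpa [hv] using h2
  have hpu : ∀ i j (q : Fin (d+1) → F), A i * A j = ∑ l, q l • A l → ∀ l, q l = p l i j := by
    intro i j q hq l
    have h0 : ∑ l, (q l - p l i j) • A l = 0 := by
      simp only [sub_smul, Finset.sum_sub_distrib, ← hq, ← hp i j, sub_self]
    exact sub_eq_zero.1 (hAind _ h0 l)
  have hAco : ∀ i, ∃ c : Fin (d+1) → F, A i = ∑ s, c s • E s := by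
    intro i
    obtain ⟨c, hc⟩ := (Submodule.mem_span_range_iff_exists_fun F).1 (hAmem i)
    exact ⟨c, hc.symm⟩
  choose Ac hAc using hAco
  have hEcomm : ∀ s r : Fin (d+1), E s * E r = E r * E s := by
    intro s r
    rw [hE, hE]
    rcases eq_or_ne s r with h | h
    · subst h; rfl
    · rw [if_neg h, if_neg (Ne.symm h)]
  have hAcomm : ∀ i j, A i * A j = A j * A i := by
    intro i j
    rw [hAc i, hAc j, Finset.sum_mul_sum, Finset.sum_mul_sum]
    rw [Finset.sum_comm]
    refine Finset.sum_congr rfl fun s _ => Finset.sum_congr rfl fun r _ => ?_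
    rw [smul_mul_assoc, smul_mul_assoc, mul_smul_comm, mul_smul_comm, hEcomm s r,
      smul_comm]
  have hdagA : ∀ i, dag (A i) = A i := by
    intro i
    rw [hAc i, map_sum]
    exact Finset.sum_congr rfl fun s _ => by rw [map_smul, hdagE]
  have hAV : ∀ i j, A i * (Es j * E 0) = ∑ l, p l i j • (Es l * E 0) := by
    intro i j
    rw [← hAdef j, ← mul_assoc, hp i j, Finset.sum_mul]
    exact Finset.sum_congr rfl fun l _ => by rw [smul_mul_assoc, hAdef l]
  have hdagAV : ∀ i j, (E 0 * Es j) * A i = ∑ l, p l i j • (E 0 * Es l) := by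
    intro i j
    have h1 := congrArg dag (hAV i j)
    rw [hdagmul, hdagmul, hdagE, hdagEs, hdagA, map_sum] at h1
    rw [h1]
    exact Finset.sum_congr rfl fun l _ => by
      rw [map_smul, hdagmul, hdagE, hdagEs]
  have hsand : ∀ j l : Fin (d+1), (E 0 * Es j) * (Es l * E 0) = if j = l then t j • E 0 else 0 := by
    intro j l
    have h3 : (E 0 * Es j) * (Es l * E 0) = E 0 * (Es j * Es l) * E 0 := by
      simp only [mul_assoc]
    rw [h3, hEs j l]
    split
    · next h => subst h; exact ht j
    · next h => rw [mul_zero, zero_mul]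
  have hsym : ∀ i j h : Fin (d+1), t h * p h i j = t j * p j i h := by
    intro i j h
    have w1 : (E 0 * Es j) * (A i * (Es h * E 0)) = (t j * p j i h) • E 0 := by
      rw [hAV i h, Finset.mul_sum]
      rw [Finset.sum_congr rfl fun l _ => mul_smul_comm (p l i h) (E 0 * Es j) (Es l * E 0)]
      rw [Finset.sum_congr rfl fun l _ => by rw [hsand j l]]
      rw [Finset.sum_eq_single j]
      · rw [if_pos rfl, smul_smul, mul_comm (p j i h)]
      · intro l _ hl; rw [if_neg (Ne.symm hl), smul_zero]
      · intro h'; exact absurd (Finset.mem_univ _) h'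
    have w2 : (E 0 * Es j) * A i * (Es h * E 0) = (t h * p h i j) • E 0 := by
      rw [hdagAV i j, Finset.sum_mul]
      rw [Finset.sum_congr rfl fun l _ => smul_mul_assoc (p l i j) (E 0 * Es l) (Es h * E 0)]
      rw [Finset.sum_congr rfl fun l _ => by rw [hsand l h]]
      rw [Finset.sum_eq_single h]
      · rw [if_pos rfl, smul_smul, mul_comm (p h i j)]
      · intro l _ hl; rw [if_neg hl, smul_zero]
      · intro h'; exact absurd (Finset.mem_univ _) h'
    rw [← mul_assoc] at w1
    rw [w1] at w2
    have h4 : (t j * p j i h - t h * p h i j) • E 0 = 0 := by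
      rw [sub_smul, w2, sub_self]
    have h5 := (smul_eq_zero.1 h4).resolve_right hE0ne
    exact (sub_eq_zero.1 h5).symm
  have hcomm : ∀ l i j : Fin (d+1), p l i j = p l j i := by
    intro l i j
    exact hpu j i (fun l => p l i j) (by rw [← hAcomm i j]; exact hp i j) l
  constructor
  · rintro ⟨hP, α, β, hα, hX⟩
    have hPv : ∀ h i j : Fin (d+1), ((i:ℕ)+(j:ℕ) < (h:ℕ) ∨ (h:ℕ)+(j:ℕ) < (i:ℕ) ∨ (h:ℕ)+(i:ℕ) < (j:ℕ)) → p h i j = 0 :=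
      fun h i j => (hP h i j).1
    have hPn : ∀ h i j : Fin (d+1), ((h:ℕ) = (i:ℕ)+(j:ℕ) ∨ (i:ℕ) = (h:ℕ)+(j:ℕ) ∨ (j:ℕ) = (h:ℕ)+(i:ℕ)) → p h i j ≠ 0 :=
      fun h i j => (hP h i j).2
    have hA0l : ∀ l, A 0 * (Es l * E 0) = Es l * E 0 := by
      intro l
      rw [← hAdef l, ← mul_assoc, hAcomm 0 l, mul_assoc, hAdef 0, hAdef l]
    have hA0 : A 0 = 1 := by
      have hvli : LinearIndependent F v := Fintype.linearIndependent_iff.2 fun g hg i => hvind g hg i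
      have hcard : Fintype.card (Fin (d+1)) = Module.finrank F V := by
        rw [Fintype.card_fin, hdim]
      let bV := basisOfLinearIndependentOfCardEqFinrank hvli hcard
      have hbV : ∀ l, bV l = v l := fun l =>
        congrFun (coe_basisOfLinearIndependentOfCardEqFinrank hvli hcard) l
      apply bV.ext
      intro l
      rw [hbV l, Module.End.one_apply]
      have h4 := LinearMap.congr_fun (hA0l l) x₀
      simpa [hv] using h4
    have hXA1 : A 1 = α⁻¹ • X - (α⁻¹ * β) • 1 := by
      rw [hX, smul_add, smul_smul, inv_mul_cancel₀ hα, one_smul, smul_smul]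
      abel
    set f1 : Polynomial F := Polynomial.C α⁻¹ * Polynomial.X - Polynomial.C (α⁻¹ * β) with hf1def
    have hf1deg : f1.degree = 1 := by
      rw [hf1def, sub_eq_add_neg, ← map_neg]
      exact Polynomial.degree_linear (inv_ne_zero hα)
    have hf1aeval : Polynomial.aeval X f1 = α⁻¹ • X - (α⁻¹ * β) • 1 := by
      rw [hf1def, map_sub, map_mul, Polynomial.aeval_C, Polynomial.aeval_X, Polynomial.aeval_C,
        Algebra.algebraMap_eq_smul_one, Algebra.algebraMap_eq_smul_one, smul_mul_assoc, one_mul]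
    have hA1f : A 1 = Polynomial.aeval X f1 := by rw [hXA1, ← hf1aeval]
    open Fin.NatCast in set cf : ℕ → F × F × F := fun n =>
      ((p (↑(n+2) : Fin (d+1)) 1 (↑(n+1)))⁻¹, p (↑(n+1) : Fin (d+1)) 1 (↑(n+1)),
        p (↑n : Fin (d+1)) 1 (↑(n+1))) with hcf
    set f : ℕ → Polynomial F := recPoly f1 cf with hfdef
    open Fin.NatCast in have hcast : ∀ (k : ℕ) (hk : k < d+1), ((k : Fin (d+1))) = ⟨k, hk⟩ :=
      fun k hk => Fin.ext (Fin.val_cast_of_lt hk)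
    have hrec : ∀ (n : ℕ) (hn2 : n + 2 < d + 1),
        A 1 * A ⟨n+1, by omega⟩ = p ⟨n, by omega⟩ 1 ⟨n+1, by omega⟩ • A ⟨n, by omega⟩
          + p ⟨n+1, by omega⟩ 1 ⟨n+1, by omega⟩ • A ⟨n+1, by omega⟩
          + p ⟨n+2, hn2⟩ 1 ⟨n+1, by omega⟩ • A ⟨n+2, hn2⟩ := by
      intro n hn2
      have hb : (⟨n, by omega⟩ : Fin (d+1)) ∉ ({⟨n+1, by omega⟩, ⟨n+2, hn2⟩} : Finset (Fin (d+1))) := by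
        simp only [Finset.mem_insert, Finset.mem_singleton]
        push_neg
        constructor <;> (intro hq; have := congrArg Fin.val hq; simp at this)
      have hb2 : (⟨n+1, by omega⟩ : Fin (d+1)) ∉ ({⟨n+2, hn2⟩} : Finset (Fin (d+1))) := by
        simp only [Finset.mem_singleton]
        intro hq; have := congrArg Fin.val hq; simp at this
      rw [hp 1 ⟨n+1, by omega⟩]
      rw [← Finset.sum_subset (Finset.subset_univ
        ({⟨n, by omega⟩, ⟨n+1, by omega⟩, ⟨n+2, hn2⟩} : Finset (Fin (d+1)))) ?van]
      · rw [Finset.sum_insert hb, Finset.sum_insert hb2, Finset.sum_singleton]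
        abel
      case van =>
        intro l _ hl
        simp only [Finset.mem_insert, Finset.mem_singleton] at hl
        push_neg at hl
        obtain ⟨h1, h2, h3⟩ := hl
        have hv1' : ((1 : Fin (d+1)) : ℕ) = 1 := hv1
        have hn' : (l : ℕ) ≠ n := fun hq => h1 (Fin.ext hq)
        have hn1' : (l : ℕ) ≠ n+1 := fun hq => h2 (Fin.ext hq)
        have hn2' : (l : ℕ) ≠ n+2 := fun hq => h3 (Fin.ext hq)
        rw [hPv l 1 ⟨n+1, by omega⟩ (by rw [hv1']; simp only [Fin.val_mk]; omega), zero_smul]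
    have key : ∀ n : ℕ,
        (∀ hn : n < d + 1, (f n).degree = ((n : ℕ) : WithBot ℕ)
          ∧ A ⟨n, hn⟩ = Polynomial.aeval X (f n))
        ∧ (∀ hn : n + 1 < d + 1, (f (n+1)).degree = ((n+1 : ℕ) : WithBot ℕ)
          ∧ A ⟨n+1, hn⟩ = Polynomial.aeval X (f (n+1))) := by
      intro n
      induction n with
      | zero =>
        have hf0 : f 0 = 1 := rfl
        have hf1' : f 1 = f1 := rfl
        constructor
        · intro hn
          refine ⟨?_, ?_⟩
          · rw [hf0, Polynomial.degree_one]
            norm_num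
          · have h0 : (⟨0, hn⟩ : Fin (d+1)) = 0 := rfl
            rw [h0, hA0, hf0, map_one]
        · intro hn
          refine ⟨?_, ?_⟩
          · rw [hf1', hf1deg]
            norm_num
          · have h1 : (⟨1, hn⟩ : Fin (d+1)) = 1 := by
              apply Fin.ext
              rw [hv1]
            rw [h1, hf1', hA1f]
      | succ n ih =>
        refine ⟨ih.2, ?_⟩
        intro hn2
        obtain ⟨hdn, hAn⟩ := ih.1 (by omega)
        obtain ⟨hdn1, hAn1⟩ := ih.2 (by omega)
        set q0 := p ⟨n, by omega⟩ 1 ⟨n+1, by omega⟩ with hq0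
        set q1 := p ⟨n+1, by omega⟩ 1 ⟨n+1, by omega⟩ with hq1
        set q2 := p ⟨n+2, hn2⟩ 1 ⟨n+1, by omega⟩ with hq2
        have hq2ne : q2 ≠ 0 := by
          apply hPn
          left
          rw [hv1]
          simp only [Fin.val_mk]
          omega
        have hfn2 : f (n+2) = Polynomial.C q2⁻¹ *
            (f1 * f (n+1) - Polynomial.C q1 * f (n+1) - Polynomial.C q0 * f n) := by
          show recPoly f1 cf (n+2) = _
          rw [recPoly]
          open Fin.NatCast in have e0 : ((n : Fin (d+1))) = ⟨n, by omega⟩ := hcast n (by omega)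
          open Fin.NatCast in have e1 : ((↑(n+1) : Fin (d+1))) = ⟨n+1, by omega⟩ := hcast (n+1) (by omega)
          open Fin.NatCast in have e2 : ((↑(n+2) : Fin (d+1))) = ⟨n+2, hn2⟩ := hcast (n+2) hn2
          simp only [hcf, e0, e1, e2]
          rfl
        have hAn2 : A ⟨n+2, hn2⟩ = q2⁻¹ • (A 1 * A ⟨n+1, by omega⟩
            - q1 • A ⟨n+1, by omega⟩ - q0 • A ⟨n, by omega⟩) := by
          have hmv : A 1 * A ⟨n+1, by omega⟩ - q1 • A ⟨n+1, by omega⟩ - q0 • A ⟨n, by omega⟩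
              = q2 • A ⟨n+2, hn2⟩ := by
            rw [hrec n hn2, ← hq0, ← hq1, ← hq2]
            abel
          rw [hmv, smul_smul, inv_mul_cancel₀ hq2ne, one_smul]
        constructor
        · have hd1 : (f1 * f (n+1)).degree = ((n+2 : ℕ) : WithBot ℕ) := by
            rw [Polynomial.degree_mul, hf1deg, hdn1]
            rw [← Nat.cast_one (R := WithBot ℕ), ← Nat.cast_add]
            exact_mod_cast congrArg (Nat.cast : ℕ → WithBot ℕ) (by omega : 1 + (n+1) = n+2)
          have hd2 : (Polynomial.C q1 * f (n+1)).degree < ((n+2 : ℕ) : WithBot ℕ) := by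
            calc (Polynomial.C q1 * f (n+1)).degree
                ≤ (Polynomial.C q1).degree + (f (n+1)).degree := Polynomial.degree_mul_le _ _
              _ ≤ 0 + ((n+1 : ℕ) : WithBot ℕ) := add_le_add Polynomial.degree_C_le (le_of_eq hdn1)
              _ = ((n+1 : ℕ) : WithBot ℕ) := zero_add _
              _ < ((n+2 : ℕ) : WithBot ℕ) := by exact_mod_cast Nat.lt_succ_self (n+1)
          have hd3 : (Polynomial.C q0 * f n).degree < ((n+2 : ℕ) : WithBot ℕ) := by
            calc (Polynomial.C q0 * f n).degree
                ≤ (Polynomial.C q0).degree + (f n).degree := Polynomial.degree_mul_le _ _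
              _ ≤ 0 + ((n : ℕ) : WithBot ℕ) := add_le_add Polynomial.degree_C_le (le_of_eq hdn)
              _ = ((n : ℕ) : WithBot ℕ) := zero_add _
              _ < ((n+2 : ℕ) : WithBot ℕ) := by exact_mod_cast by omega
          have hs1 : (f1 * f (n+1) - Polynomial.C q1 * f (n+1)).degree = ((n+2 : ℕ) : WithBot ℕ) := by
            rw [Polynomial.degree_sub_eq_left_of_degree_lt (by rw [hd1]; exact hd2)]
            exact hd1
          have hs2 : (f1 * f (n+1) - Polynomial.C q1 * f (n+1) - Polynomial.C q0 * f n).degree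
              = ((n+2 : ℕ) : WithBot ℕ) := by
            rw [Polynomial.degree_sub_eq_left_of_degree_lt (by rw [hs1]; exact hd3)]
            exact hs1
          rw [hfn2, Polynomial.degree_C_mul (inv_ne_zero hq2ne), hs2]
        · rw [hAn2, hfn2]
          rw [map_mul, map_sub, map_sub, map_mul, map_mul, map_mul, Polynomial.aeval_C,
            Polynomial.aeval_C, Polynomial.aeval_C, Algebra.algebraMap_eq_smul_one,
            Algebra.algebraMap_eq_smul_one, Algebra.algebraMap_eq_smul_one,
            smul_mul_assoc, smul_mul_assoc, smul_mul_assoc, one_mul, one_mul, one_mul,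
            ← hA1f, ← hAn, ← hAn1]
    intro i
    obtain ⟨hdeg, hAeq⟩ := (key i.val).1 i.isLt
    refine ⟨f i.val, hdeg, ?_⟩
    have : (⟨i.val, i.isLt⟩ : Fin (d+1)) = i := Fin.ext rfl
    rw [← this, hAeq]
  · intro hf
    choose f hfdeg hfA using hf
    have hnatdeg : ∀ l : Fin (d+1), (f l).natDegree = (l : ℕ) :=
      fun l => Polynomial.natDegree_eq_of_degree_eq_some (hfdeg l)
    have hfne : ∀ l : Fin (d+1), f l ≠ 0 := by
      intro l h0
      have h1 := hfdeg l
      rw [h0, Polynomial.degree_zero] at h1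
      exact absurd h1.symm (by simp)
    have hlead : ∀ l : Fin (d+1), (f l).coeff (l : ℕ) ≠ 0 := by
      intro l
      have h1 := Polynomial.leadingCoeff_ne_zero.2 (hfne l)
      rwa [Polynomial.leadingCoeff, hnatdeg l] at h1
    have haevalsum : ∀ c : Fin (d+1) → F,
        Polynomial.aeval X (∑ l, c l • f l) = ∑ l, c l • A l := by
      intro c
      rw [map_sum]
      exact Finset.sum_congr rfl fun l _ => by rw [map_smul, hfA l]
    have hexp : ∀ (b c : Fin (d+1)) (hn : (b:ℕ) + (c:ℕ) < d+1),
        (∀ l : Fin (d+1), (b:ℕ)+(c:ℕ) < (l:ℕ) → p l b c = 0) ∧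
        p ⟨(b:ℕ)+(c:ℕ), hn⟩ b c ≠ 0 := by
      intro b c hn
      have hdegmul : (f b * f c).degree ≤ (((b:ℕ)+(c:ℕ) : ℕ) : WithBot ℕ) := by
        rw [Polynomial.degree_mul, hfdeg b, hfdeg c]
        push_cast
        exact le_rfl
      obtain ⟨cc, hccsum, hccvan, hccval⟩ := poly_expand f hfdeg _ hn (f b * f c) hdegmul
      have hAbc : A b * A c = ∑ l, cc l • A l := by
        rw [hfA b, hfA c, ← map_mul, hccsum, haevalsum]
      have hpc := hpu b c cc hAbc
      constructor
      · intro l hl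
        rw [← hpc l]
        exact hccvan l hl
      · rw [← hpc _, hccval]
        refine mul_ne_zero ?_ (inv_ne_zero ?_)
        · have h1 := Polynomial.coeff_mul_degree_add_degree (f b) (f c)
          rw [hnatdeg b, hnatdeg c] at h1
          rw [h1]
          exact mul_ne_zero (by rw [Polynomial.leadingCoeff, hnatdeg b]; exact hlead b)
            (by rw [Polynomial.leadingCoeff, hnatdeg c]; exact hlead c)
        · exact hlead ⟨(b:ℕ)+(c:ℕ), hn⟩
    have hvan : ∀ a b c : Fin (d+1), (b:ℕ)+(c:ℕ) < (a:ℕ) → p a b c = 0 := by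
      intro a b c hlt
      have hn : (b:ℕ)+(c:ℕ) < d+1 := by have := a.isLt; omega
      exact (hexp b c hn).1 a hlt
    have hnonv : ∀ a b c : Fin (d+1), (a:ℕ) = (b:ℕ)+(c:ℕ) → p a b c ≠ 0 := by
      intro a b c heq
      have hn : (b:ℕ)+(c:ℕ) < d+1 := by have := a.isLt; omega
      have ha : a = ⟨(b:ℕ)+(c:ℕ), hn⟩ := Fin.ext heq
      rw [ha]
      exact (hexp b c hn).2
    refine ⟨fun h i j => ⟨?_, ?_⟩, ?_⟩
    · rintro (hlt | hlt | hlt)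
      · exact hvan h i j hlt
      · have h1 : p i j h = 0 := hvan i j h (by omega)
        have h2 := hsym j i h
        rw [hcomm h i j]
        have h3 : t h * p h j i = 0 := by rw [h2, h1, mul_zero]
        exact (mul_eq_zero.1 h3).resolve_left (htne h)
      · have h1 : p j i h = 0 := hvan j i h (by omega)
        have h2 := hsym i j h
        have h3 : t h * p h i j = 0 := by rw [h2, h1, mul_zero]
        exact (mul_eq_zero.1 h3).resolve_left (htne h)
    · rintro (heq | heq | heq)
      · exact hnonv h i j heq
      · have h1 : p i j h ≠ 0 := hnonv i j h (by omega)
        have h2 := hsym j i h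
        rw [hcomm h i j]
        intro h0
        rw [h0, mul_zero] at h2
        exact h1 ((mul_eq_zero.1 h2.symm).resolve_left (htne i))
      · have h1 : p j i h ≠ 0 := hnonv j i h (by omega)
        have h2 := hsym i j h
        intro h0
        rw [h0, mul_zero] at h2
        exact h1 ((mul_eq_zero.1 h2.symm).resolve_left (htne j))
    · have hdeg1 : (f 1).degree ≤ 1 := by
        rw [hfdeg 1, hv1]
        exact_mod_cast le_rfl
      set a := (f 1).coeff 1 with hadef
      set b := (f 1).coeff 0 with hbdef
      have ha : a ≠ 0 := by
        have h1 := hlead 1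
        rwa [hv1] at h1
      have hf1 : f 1 = Polynomial.C a * Polynomial.X + Polynomial.C b :=
        Polynomial.eq_X_add_C_of_degree_le_one hdeg1
      have hA1 : A 1 = a • X + b • 1 := by
        rw [hfA 1, hf1, map_add, map_mul, Polynomial.aeval_C, Polynomial.aeval_X,
          Polynomial.aeval_C, Algebra.algebraMap_eq_smul_one, Algebra.algebraMap_eq_smul_one,
          smul_mul_assoc, one_mul]
      refine ⟨a⁻¹, -(a⁻¹ * b), inv_ne_zero ha, ?_⟩
      rw [hA1, smul_add, smul_smul, inv_mul_cancel₀ ha, one_smul, smul_smul, neg_smul]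
      abel
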